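/- Let ρ_AB, ρ_BC, ρ_AC be three compatible fully classical bipartite states whose single-party reduced states ρ_A, ρ_B, ρ_C all have nondegenerate spectra (all eigenvalues simple). Then there exists a fully classical tripartite state whose two-body reductions are ρ_AB, ρ_BC, ρ_AC. -/

import Mathlib

open Matrix BigOperators
open scoped Kronecker ComplexOrder

namespace QMarginal

abbrev Mat (n : ℕ) := Matrix (Fin n) (Fin n) ℂ
abbrev Bip (m n : ℕ) := Matrix (Fin m × Fin n) (Fin m × Fin n) ℂ
abbrev Tri (dA dB dC : ℕ) := Matrix (Fin dA × Fin dB × Fin dC) (Fin dA × Fin dB × Fin dC) ℂ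

/-- partial trace over the third system -/
noncomputable def trC {dA dB dC : ℕ} (ρ : Tri dA dB dC) : Bip dA dB :=
  fun x y => ∑ c : Fin dC, ρ (x.1, x.2, c) (y.1, y.2, c)

/-- partial trace over the second system -/
noncomputable def trB {dA dB dC : ℕ} (ρ : Tri dA dB dC) : Bip dA dC :=
  fun x y => ∑ b : Fin dB, ρ (x.1, b, x.2) (y.1, b, y.2)

/-- partial trace over the first system -/
noncomputable def trA {dA dB dC : ℕ} (ρ : Tri dA dB dC) : Bip dB dC :=
  fun x y => ∑ a : Fin dA, ρ (a, x.1, x.2) (a, y.1, y.2)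

/-- partial trace of a bipartite matrix over the right factor -/
noncomputable def trR {m n : ℕ} (ρ : Bip m n) : Mat m :=
  fun i j => ∑ b : Fin n, ρ (i, b) (j, b)

/-- partial trace of a bipartite matrix over the left factor -/
noncomputable def trL {m n : ℕ} (ρ : Bip m n) : Mat n :=
  fun i j => ∑ a : Fin m, ρ (a, i) (a, j)

def IsDensity {ι : Type*} [Fintype ι] [DecidableEq ι] (ρ : Matrix ι ι ℂ) : Prop :=
  ρ.PosSemidef ∧ ρ.trace = 1

/-- rank-one projector onto a vector -/
def projV {ι : Type*} (v : ι → ℂ) : Matrix ι ι ℂ := fun i j => v i * star (v j)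

def prod2 {m n : ℕ} (v : Fin m → ℂ) (w : Fin n → ℂ) : Fin m × Fin n → ℂ :=
  fun x => v x.1 * w x.2

def prod3 {dA dB dC : ℕ} (u : Fin dA → ℂ) (v : Fin dB → ℂ) (w : Fin dC → ℂ) :
    Fin dA × Fin dB × Fin dC → ℂ :=
  fun x => u x.1 * v x.2.1 * w x.2.2

/-- a family of vectors forming an orthonormal basis -/
def ONB {n : ℕ} (a : Fin n → Fin n → ℂ) : Prop :=
  ∀ i j, (∑ k, star (a i k) * a j k) = if i = j then (1:ℂ) else 0

/-- fully classical bipartite state -/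
def FullyClassical {m n : ℕ} (ρ : Bip m n) : Prop :=
  ∃ (a : Fin m → Fin m → ℂ) (b : Fin n → Fin n → ℂ) (p : Fin m → Fin n → ℝ),
    ONB a ∧ ONB b ∧ (∀ i j, 0 ≤ p i j) ∧
    ρ = ∑ i, ∑ j, (p i j) • projV (prod2 (a i) (b j))

/-- fully classical tripartite state -/
def FullyClassicalTri {dA dB dC : ℕ} (ρ : Tri dA dB dC) : Prop :=
  ∃ (a : Fin dA → Fin dA → ℂ) (b : Fin dB → Fin dB → ℂ) (c : Fin dC → Fin dC → ℂ)
    (f : Fin dA → Fin dB → Fin dC → ℝ),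
    ONB a ∧ ONB b ∧ ONB c ∧ (∀ i j k, 0 ≤ f i j k) ∧
    ρ = ∑ i, ∑ j, ∑ k, (f i j k) • projV (prod3 (a i) (b j) (c k))

/-- fully separable tripartite state -/
def FullySepTri {dA dB dC : ℕ} (ρ : Tri dA dB dC) : Prop :=
  ∃ (N : ℕ) (p : Fin N → ℝ) (u : Fin N → Fin dA → ℂ) (v : Fin N → Fin dB → ℂ)
    (w : Fin N → Fin dC → ℂ),
    (∀ i, 0 ≤ p i) ∧ ρ = ∑ i, (p i) • projV (prod3 (u i) (v i) (w i))

/-- M ⊗ I_C on the tripartite space, M acting on A ⊗ B -/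
def embAB {dA dB : ℕ} (M : Bip dA dB) (dC : ℕ) : Tri dA dB dC :=
  fun x y => M (x.1, x.2.1) (y.1, y.2.1) * (if x.2.2 = y.2.2 then 1 else 0)

/-- M ⊗ I_B on the tripartite space, M acting on A ⊗ C -/
def embAC {dA dC : ℕ} (M : Bip dA dC) (dB : ℕ) : Tri dA dB dC :=
  fun x y => M (x.1, x.2.2) (y.1, y.2.2) * (if x.2.1 = y.2.1 then 1 else 0)

/-- M ⊗ I_A on the tripartite space, M acting on B ⊗ C -/
def embBC {dB dC : ℕ} (M : Bip dB dC) (dA : ℕ) : Tri dA dB dC :=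
  fun x y => M (x.2.1, x.2.2) (y.2.1, y.2.2) * (if x.1 = y.1 then 1 else 0)

/-- a matrix has a repeated eigenvalue -/
def Degenerate {n : ℕ} (ρ : Mat n) : Prop :=
  ∃ (μ : ℂ) (v w : Fin n → ℂ), LinearIndependent ℂ ![v, w] ∧
    ρ *ᵥ v = μ • v ∧ ρ *ᵥ w = μ • w

lemma onb_col {n : ℕ} {a : Fin n → Fin n → ℂ} (h : ONB a) (x y : Fin n) :
    (∑ i, star (a i x) * a i y) = if x = y then 1 else 0 := by
  have h1 : (Matrix.of a) * (Matrix.of a)ᴴ = 1 := by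
    ext i j
    have := congrArg star (h i j)
    simp only [star_sum, star_mul', star_star] at this
    simp only [Matrix.mul_apply, Matrix.conjTranspose_apply, Matrix.of_apply, Matrix.one_apply]
    rw [this]
    split <;> simp
  have h2 : (Matrix.of a)ᴴ * (Matrix.of a) = 1 := mul_eq_one_comm.mp h1
  have := congrFun (congrFun h2 x) y
  simpa [Matrix.mul_apply, Matrix.conjTranspose_apply, Matrix.one_apply] using this

lemma projV_mulVec {ι : Type*} [Fintype ι] (v w : ι → ℂ) :
    projV v *ᵥ w = (∑ y, star (v y) * w y) • v := by
  ext x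
  simp only [Matrix.mulVec, dotProduct, projV, Pi.smul_apply, smul_eq_mul,
    Finset.sum_mul]
  exact Finset.sum_congr rfl fun y _ => by ring

lemma mulVec_sum {ι : Type*} {κ : Type*} [Fintype ι] (s : Finset κ) (M : κ → Matrix ι ι ℂ) (w : ι → ℂ) :
    (∑ m ∈ s, M m) *ᵥ w = ∑ m ∈ s, (M m) *ᵥ w := by
  ext x
  simp [Matrix.mulVec, dotProduct, Matrix.sum_apply, Finset.sum_mul]
  rw [Finset.sum_comm]

lemma eig {n : ℕ} {a : Fin n → Fin n → ℂ} (ha : ONB a) (t : Fin n → ℂ) (i : Fin n) :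
    (∑ m, t m • projV (a m)) *ᵥ a i = t i • a i := by
  rw [mulVec_sum]
  have : ∀ m, (t m • projV (a m)) *ᵥ a i = (t m * if m = i then 1 else 0) • a m := by
    intro m
    rw [Matrix.smul_mulVec, projV_mulVec, ha m i, smul_smul]
  simp only [this]
  rw [Fintype.sum_eq_single i (fun m hm => by simp [hm])]
  simp

lemma pair_li {n : ℕ} {a : Fin n → Fin n → ℂ} (ha : ONB a) {i j : Fin n} (hij : i ≠ j) :
    LinearIndependent ℂ ![a i, a j] := by
  rw [LinearIndependent.pair_iff]
  intro s t hst
  have hpt : ∀ x, s * a i x + t * a j x = 0 := by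
    intro x
    have := congrFun hst x
    simpa using this
  have key : ∀ (u : Fin n), (∑ x, star (a u x) * (s * a i x + t * a j x)) = 0 := by
    intro u; simp [hpt]
  have ki := key i
  have kj := key j
  simp only [mul_add, Finset.sum_add_distrib] at ki kj
  have e1 : ∀ u w : Fin n, ∀ c : ℂ, (∑ x, star (a u x) * (c * a w x)) = c * ∑ x, star (a u x) * a w x := by
    intro u w c
    rw [Finset.mul_sum]
    exact Finset.sum_congr rfl fun x _ => by ring
  rw [e1, e1, ha i i, ha i j] at ki
  rw [e1, e1, ha j i, ha j j] at kj
  simp [hij, hij.symm] at ki kj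
  exact ⟨ki, kj⟩

lemma rigidity {n : ℕ} {a a' : Fin n → Fin n → ℂ} {lam mu : Fin n → ℝ}
    (ha : ONB a) (ha' : ONB a')
    (heq : (∑ i, (lam i : ℂ) • projV (a i)) = ∑ k, (mu k : ℂ) • projV (a' k))
    (hnd : ¬ Degenerate (∑ i, (lam i : ℂ) • projV (a i))) :
    ∃ e : Equiv.Perm (Fin n), ∀ k, projV (a' k) = projV (a (e k)) := by
  set ρ0 := ∑ i, (lam i : ℂ) • projV (a i) with hρ0
  have hlam : ∀ i j, lam i = lam j → i = j := by
    intro i j hij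
    by_contra hne
    exact hnd ⟨(lam i : ℂ), a i, a j, pair_li ha hne,
      eig ha _ i, by rw [eig ha _ j, hij]⟩
  obtain ⟨c, hcdef⟩ : ∃ c : Fin n → Fin n → ℂ,
      ∀ k j, c k j = ∑ x, star (a j x) * a' k x := ⟨_, fun _ _ => rfl⟩
  have hexp : ∀ k y, a' k y = ∑ j, c k j * a j y := by
    intro k y
    have h5 : ∀ j, c k j * a j y = ∑ x, a' k x * (star (a j x) * a j y) := by
      intro j
      rw [hcdef, Finset.sum_mul]
      exact Finset.sum_congr rfl fun x _ => by ring
    simp only [h5]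
    rw [Finset.sum_comm]
    have h6 : ∀ x, (∑ j, a' k x * (star (a j x) * a j y)) = a' k x * ∑ j, star (a j x) * a j y := by
      intro x; rw [Finset.mul_sum]
    simp only [h6, onb_col ha]
    simp
  have hcoef : ∀ k j, (lam j : ℂ) * c k j = (mu k : ℂ) * c k j := by
    intro k j
    have h1 : ρ0 *ᵥ a' k = ∑ m, ((lam m : ℂ) * c k m) • a m := by
      rw [hρ0, mulVec_sum]
      refine Finset.sum_congr rfl fun m _ => ?_
      rw [Matrix.smul_mulVec, projV_mulVec, smul_smul, hcdef]
    have h2 : ρ0 *ᵥ a' k = (mu k : ℂ) • a' k := by rw [heq]; exact eig ha' _ k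
    have lhs_val : (∑ x, star (a j x) * (∑ m, ((lam m : ℂ) * c k m) • a m) x)
        = (lam j : ℂ) * c k j := by
      simp only [Finset.sum_apply, Pi.smul_apply, smul_eq_mul]
      have h7 : ∀ m, (∑ x, star (a j x) * ((lam m : ℂ) * c k m * a m x))
          = (lam m : ℂ) * c k m * ∑ x, star (a j x) * a m x := by
        intro m; rw [Finset.mul_sum]; exact Finset.sum_congr rfl fun x _ => by ring
      have h8 : ∀ x, star (a j x) * (∑ m, (lam m : ℂ) * c k m * a m x)
          = ∑ m, star (a j x) * ((lam m : ℂ) * c k m * a m x) := by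
        intro x; rw [Finset.mul_sum]
      simp only [h8]
      rw [Finset.sum_comm]
      simp only [h7, ha j]
      rw [Fintype.sum_eq_single j (fun m hm => by simp [Ne.symm hm])]
      simp
    have rhs_val : (∑ x, star (a j x) * ((mu k : ℂ) • a' k) x) = (mu k : ℂ) * c k j := by
      simp only [Pi.smul_apply, smul_eq_mul]
      rw [hcdef, Finset.mul_sum]
      exact Finset.sum_congr rfl fun x _ => by ring
    calc (lam j : ℂ) * c k j = ∑ x, star (a j x) * (ρ0 *ᵥ a' k) x := by rw [h1, lhs_val]
      _ = (mu k : ℂ) * c k j := by rw [h2, rhs_val]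
  have hnz : ∀ k, ∃ j, c k j ≠ 0 := by
    intro k
    by_contra hall
    push_neg at hall
    have hz : a' k = 0 := by
      funext y; rw [hexp k y]; simp [hall]
    have h1 := ha' k k
    simp [hz] at h1
  have huniq : ∀ k j j', c k j ≠ 0 → c k j' ≠ 0 → j = j' := by
    intro k j j' hj hj'
    have e1 : (lam j : ℂ) = (mu k : ℂ) := mul_right_cancel₀ hj (hcoef k j)
    have e2 : (lam j' : ℂ) = (mu k : ℂ) := mul_right_cancel₀ hj' (hcoef k j')
    have e3 : lam j = lam j' := by exact_mod_cast e1.trans e2.symm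
    exact hlam _ _ e3
  choose g hg using hnz
  have hsingle : ∀ k y, a' k y = c k (g k) * a (g k) y := by
    intro k y
    rw [hexp k y]
    rw [Fintype.sum_eq_single (g k) (fun j hj => ?_)]
    have hz : c k j = 0 := by
      by_contra hne
      exact hj (huniq k j (g k) hne (hg k))
    simp [hz]
  have hnorm : ∀ k, star (c k (g k)) * c k (g k) = 1 := by
    intro k
    have h1 := ha' k k
    simp only [if_pos rfl] at h1
    rw [show (∑ x, star (a' k x) * a' k x)
        = ∑ x, (star (c k (g k)) * c k (g k)) * (star (a (g k) x) * a (g k) x) from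
      Finset.sum_congr rfl fun x _ => by rw [hsingle k x, star_mul']; ring] at h1
    rw [← Finset.mul_sum, ha (g k) (g k), if_pos rfl, mul_one] at h1
    exact h1
  have hproj : ∀ k, projV (a' k) = projV (a (g k)) := by
    intro k
    funext x y
    show a' k x * star (a' k y) = a (g k) x * star (a (g k) y)
    rw [hsingle k x, hsingle k y]
    calc c k (g k) * a (g k) x * star (c k (g k) * a (g k) y)
        = (star (c k (g k)) * c k (g k)) * (a (g k) x * star (a (g k) y)) := by
          rw [star_mul']; ring
      _ = a (g k) x * star (a (g k) y) := by rw [hnorm k, one_mul]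
  have hinj : Function.Injective g := by
    intro k k' hkk
    by_contra hne
    have h1 := ha' k k'
    rw [if_neg hne] at h1
    rw [show (∑ x, star (a' k x) * a' k' x)
        = ∑ x, (star (c k (g k)) * c k' (g k')) * (star (a (g k) x) * a (g k') x) from
      Finset.sum_congr rfl fun x _ => by rw [hsingle k x, hsingle k' x, star_mul']; ring] at h1
    rw [← Finset.mul_sum, hkk, ha (g k') (g k'), if_pos rfl, mul_one] at h1
    rcases mul_eq_zero.mp h1 with h | h
    · exact hg k (by rw [hkk]; exact star_eq_zero.mp h)
    · exact hg k' h
  exact ⟨Equiv.ofBijective g (Finite.injective_iff_bijective.mp hinj), fun k => hproj k⟩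

lemma qf_expand {ι : Type*} [Fintype ι] (M : Matrix ι ι ℂ) (w : ι → ℂ) :
    star w ⬝ᵥ M *ᵥ w = ∑ x, ∑ y, star (w x) * M x y * w y := by
  simp only [dotProduct, Matrix.mulVec, Pi.star_apply, Finset.mul_sum]
  exact Finset.sum_congr rfl fun x _ => Finset.sum_congr rfl fun y _ => by ring

lemma rot3 {α β γ M : Type*} [AddCommMonoid M] [Fintype α] [Fintype β] [Fintype γ]
    (f : α → β → γ → M) :
    ∑ a, ∑ b, ∑ g, f a b g = ∑ g, ∑ a, ∑ b, f a b g := by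
  have h : ∀ a, ∑ b, ∑ g, f a b g = ∑ g, ∑ b, f a b g := fun a => Finset.sum_comm
  simp only [h]
  exact Finset.sum_comm

lemma rot4 {α β γ δ M : Type*} [AddCommMonoid M] [Fintype α] [Fintype β] [Fintype γ] [Fintype δ]
    (f : α → β → γ → δ → M) :
    ∑ a, ∑ b, ∑ g, ∑ d, f a b g d = ∑ d, ∑ a, ∑ b, ∑ g, f a b g d := by
  have h : ∀ a, ∑ b, ∑ g, ∑ d, f a b g d = ∑ d, ∑ b, ∑ g, f a b g d := fun a => rot3 _
  simp only [h]
  exact Finset.sum_comm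

lemma rot5 {α β γ δ ε M : Type*} [AddCommMonoid M] [Fintype α] [Fintype β] [Fintype γ]
    [Fintype δ] [Fintype ε] (f : α → β → γ → δ → ε → M) :
    ∑ a, ∑ b, ∑ g, ∑ d, ∑ e, f a b g d e = ∑ e, ∑ a, ∑ b, ∑ g, ∑ d, f a b g d e := by
  have h : ∀ a, ∑ b, ∑ g, ∑ d, ∑ e, f a b g d e = ∑ e, ∑ b, ∑ g, ∑ d, f a b g d e :=
    fun a => rot4 _
  simp only [h]
  exact Finset.sum_comm

lemma qf_trC {dA dB dC : ℕ} (ρ : Tri dA dB dC) {c : Fin dC → Fin dC → ℂ} (hc : ONB c)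
    (u : Fin dA → ℂ) (v : Fin dB → ℂ) :
    (∑ k, star (prod3 u v (c k)) ⬝ᵥ ρ *ᵥ prod3 u v (c k))
      = star (prod2 u v) ⬝ᵥ trC ρ *ᵥ prod2 u v := by
  have N : ∀ _ : Unit, True := fun _ => trivial
  trans ∑ x1, ∑ x2, ∑ x3, ∑ y1, ∑ y2,
      star (u x1) * star (v x2) * ρ (x1, x2, x3) (y1, y2, x3) * (u y1 * v y2)
  · simp only [fun k => qf_expand ρ (prod3 u v (c k))]
    rw [← rot3 (fun x y k => star (prod3 u v (c k) x) * ρ x y * prod3 u v (c k) y)]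
    have hinner : ∀ (x y : Fin dA × Fin dB × Fin dC),
        (∑ k, star (prod3 u v (c k) x) * ρ x y * prod3 u v (c k) y)
        = star (u x.1) * star (v x.2.1) * ρ x y * (u y.1 * v y.2.1)
            * (if x.2.2 = y.2.2 then 1 else 0) := by
      intro x y
      have h1 : ∀ k, star (prod3 u v (c k) x) * ρ x y * prod3 u v (c k) y
          = (star (c k x.2.2) * c k y.2.2)
            * (star (u x.1) * star (v x.2.1) * ρ x y * (u y.1 * v y.2.1)) := by
        intro k; simp only [prod3, star_mul']; ring
      rw [Finset.sum_congr rfl fun k _ => h1 k, ← Finset.sum_mul, onb_col hc]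
      split_ifs <;> ring
    simp only [hinner]
    simp only [Fintype.sum_prod_type]
    simp only [mul_ite, mul_one, mul_zero, Finset.sum_ite_eq, Finset.mem_univ, if_true]
  · rw [qf_expand]
    simp only [trC, prod2, star_mul', Fintype.sum_prod_type, Finset.mul_sum, Finset.sum_mul]
    refine Finset.sum_congr rfl fun x1 _ => Finset.sum_congr rfl fun x2 _ => ?_
    rw [rot3 (fun y1 y2 x3 => star (u x1) * star (v x2)
        * ρ (x1, x2, x3) (y1, y2, x3) * (u y1 * v y2))]

lemma qf_trB {dA dB dC : ℕ} (ρ : Tri dA dB dC) {b : Fin dB → Fin dB → ℂ} (hb : ONB b)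
    (u : Fin dA → ℂ) (w : Fin dC → ℂ) :
    (∑ k, star (prod3 u (b k) w) ⬝ᵥ ρ *ᵥ prod3 u (b k) w)
      = star (prod2 u w) ⬝ᵥ trB ρ *ᵥ prod2 u w := by
  trans ∑ x1, ∑ x2, ∑ x3, ∑ y1, ∑ y3,
      star (u x1) * star (w x3) * ρ (x1, x2, x3) (y1, x2, y3) * (u y1 * w y3)
  · simp only [fun k => qf_expand ρ (prod3 u (b k) w)]
    rw [← rot3 (fun x y k => star (prod3 u (b k) w x) * ρ x y * prod3 u (b k) w y)]
    have hinner : ∀ (x y : Fin dA × Fin dB × Fin dC),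
        (∑ k, star (prod3 u (b k) w x) * ρ x y * prod3 u (b k) w y)
        = star (u x.1) * star (w x.2.2) * ρ x y * (u y.1 * w y.2.2)
            * (if x.2.1 = y.2.1 then 1 else 0) := by
      intro x y
      have h1 : ∀ k, star (prod3 u (b k) w x) * ρ x y * prod3 u (b k) w y
          = (star (b k x.2.1) * b k y.2.1)
            * (star (u x.1) * star (w x.2.2) * ρ x y * (u y.1 * w y.2.2)) := by
        intro k; simp only [prod3, star_mul']; ring
      rw [Finset.sum_congr rfl fun k _ => h1 k, ← Finset.sum_mul, onb_col hb]
      split_ifs <;> ring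
    simp only [hinner]
    simp only [Fintype.sum_prod_type]
    refine Finset.sum_congr rfl fun x1 _ => Finset.sum_congr rfl fun x2 _ =>
      Finset.sum_congr rfl fun x3 _ => Finset.sum_congr rfl fun y1 _ => ?_
    rw [Finset.sum_comm]
    simp only [mul_ite, mul_one, mul_zero, Finset.sum_ite_eq, Finset.mem_univ, if_true]
  · rw [qf_expand]
    simp only [trB, prod2, star_mul', Fintype.sum_prod_type, Finset.mul_sum, Finset.sum_mul]
    refine Finset.sum_congr rfl fun x1 _ => ?_
    rw [rot4 (fun x3 y1 y3 x2 => star (u x1) * star (w x3)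
        * ρ (x1, x2, x3) (y1, x2, y3) * (u y1 * w y3))]

lemma qf_trA {dA dB dC : ℕ} (ρ : Tri dA dB dC) {a : Fin dA → Fin dA → ℂ} (ha : ONB a)
    (v : Fin dB → ℂ) (w : Fin dC → ℂ) :
    (∑ k, star (prod3 (a k) v w) ⬝ᵥ ρ *ᵥ prod3 (a k) v w)
      = star (prod2 v w) ⬝ᵥ trA ρ *ᵥ prod2 v w := by
  trans ∑ x1, ∑ x2, ∑ x3, ∑ y2, ∑ y3,
      star (v x2) * star (w x3) * ρ (x1, x2, x3) (x1, y2, y3) * (v y2 * w y3)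
  · simp only [fun k => qf_expand ρ (prod3 (a k) v w)]
    rw [← rot3 (fun x y k => star (prod3 (a k) v w x) * ρ x y * prod3 (a k) v w y)]
    have hinner : ∀ (x y : Fin dA × Fin dB × Fin dC),
        (∑ k, star (prod3 (a k) v w x) * ρ x y * prod3 (a k) v w y)
        = star (v x.2.1) * star (w x.2.2) * ρ x y * (v y.2.1 * w y.2.2)
            * (if x.1 = y.1 then 1 else 0) := by
      intro x y
      have h1 : ∀ k, star (prod3 (a k) v w x) * ρ x y * prod3 (a k) v w y
          = (star (a k x.1) * a k y.1)
            * (star (v x.2.1) * star (w x.2.2) * ρ x y * (v y.2.1 * w y.2.2)) := by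
        intro k; simp only [prod3, star_mul']; ring
      rw [Finset.sum_congr rfl fun k _ => h1 k, ← Finset.sum_mul, onb_col ha]
      split_ifs <;> ring
    simp only [hinner]
    simp only [Fintype.sum_prod_type]
    refine Finset.sum_congr rfl fun x1 _ => Finset.sum_congr rfl fun x2 _ =>
      Finset.sum_congr rfl fun x3 _ => ?_
    rw [← rot3 (fun y2 y3 y1 => star (v x2) * star (w x3)
        * ρ (x1, x2, x3) (y1, y2, y3) * (v y2 * w y3) * (if x1 = y1 then 1 else 0))]
    simp only [mul_ite, mul_one, mul_zero, Finset.sum_ite_eq, Finset.mem_univ, if_true]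
  · rw [qf_expand]
    simp only [trA, prod2, star_mul', Fintype.sum_prod_type, Finset.mul_sum, Finset.sum_mul]
    rw [rot5 (fun x2 x3 y2 y3 x1 => star (v x2) * star (w x3)
        * ρ (x1, x2, x3) (x1, y2, y3) * (v y2 * w y3))]

lemma trC_sum {dA dB dC : ℕ} {κ : Type*} (s : Finset κ) (M : κ → Tri dA dB dC) :
    trC (∑ k ∈ s, M k) = ∑ k ∈ s, trC (M k) := by
  ext x y; simp [trC, Matrix.sum_apply]; rw [Finset.sum_comm]

lemma trB_sum {dA dB dC : ℕ} {κ : Type*} (s : Finset κ) (M : κ → Tri dA dB dC) :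
    trB (∑ k ∈ s, M k) = ∑ k ∈ s, trB (M k) := by
  ext x y; simp [trB, Matrix.sum_apply]; rw [Finset.sum_comm]

lemma trA_sum {dA dB dC : ℕ} {κ : Type*} (s : Finset κ) (M : κ → Tri dA dB dC) :
    trA (∑ k ∈ s, M k) = ∑ k ∈ s, trA (M k) := by
  ext x y; simp [trA, Matrix.sum_apply]; rw [Finset.sum_comm]

lemma trC_smul {dA dB dC : ℕ} (r : ℝ) (M : Tri dA dB dC) : trC (r • M) = r • trC M := by
  ext x y; simp [trC, Finset.smul_sum]

lemma trB_smul {dA dB dC : ℕ} (r : ℝ) (M : Tri dA dB dC) : trB (r • M) = r • trB M := by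
  ext x y; simp [trB, Finset.smul_sum]

lemma trA_smul {dA dB dC : ℕ} (r : ℝ) (M : Tri dA dB dC) : trA (r • M) = r • trA M := by
  ext x y; simp [trA, Finset.smul_sum]

lemma trR_sum {m n : ℕ} {κ : Type*} (s : Finset κ) (M : κ → Bip m n) :
    trR (∑ k ∈ s, M k) = ∑ k ∈ s, trR (M k) := by
  ext x y; simp [trR, Matrix.sum_apply]; rw [Finset.sum_comm]

lemma trL_sum {m n : ℕ} {κ : Type*} (s : Finset κ) (M : κ → Bip m n) :
    trL (∑ k ∈ s, M k) = ∑ k ∈ s, trL (M k) := by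
  ext x y; simp [trL, Matrix.sum_apply]; rw [Finset.sum_comm]

lemma trR_smul {m n : ℕ} (r : ℝ) (M : Bip m n) : trR (r • M) = r • trR M := by
  ext x y; simp [trR, Finset.smul_sum]

lemma trL_smul {m n : ℕ} (r : ℝ) (M : Bip m n) : trL (r • M) = r • trL M := by
  ext x y; simp [trL, Finset.smul_sum]

lemma trC_proj3 {dA dB dC : ℕ} {u : Fin dA → ℂ} {v : Fin dB → ℂ} {w : Fin dC → ℂ}
    (hw : (∑ x, star (w x) * w x) = 1) :
    trC (projV (prod3 u v w)) = projV (prod2 u v) := by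
  ext x y
  show (∑ t, prod3 u v w (x.1, x.2, t) * star (prod3 u v w (y.1, y.2, t))) = _
  have h1 : ∀ t, prod3 u v w (x.1, x.2, t) * star (prod3 u v w (y.1, y.2, t))
      = (star (w t) * w t) * (prod2 u v x * star (prod2 u v y)) := by
    intro t; simp only [prod3, prod2, star_mul']; ring
  simp only [h1, ← Finset.sum_mul, hw, one_mul]
  rfl

lemma trB_proj3 {dA dB dC : ℕ} {u : Fin dA → ℂ} {v : Fin dB → ℂ} {w : Fin dC → ℂ}
    (hv : (∑ x, star (v x) * v x) = 1) :
    trB (projV (prod3 u v w)) = projV (prod2 u w) := by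
  ext x y
  show (∑ t, prod3 u v w (x.1, t, x.2) * star (prod3 u v w (y.1, t, y.2))) = _
  have h1 : ∀ t, prod3 u v w (x.1, t, x.2) * star (prod3 u v w (y.1, t, y.2))
      = (star (v t) * v t) * (prod2 u w x * star (prod2 u w y)) := by
    intro t; simp only [prod3, prod2, star_mul']; ring
  simp only [h1, ← Finset.sum_mul, hv, one_mul]
  rfl

lemma trA_proj3 {dA dB dC : ℕ} {u : Fin dA → ℂ} {v : Fin dB → ℂ} {w : Fin dC → ℂ}
    (hu : (∑ x, star (u x) * u x) = 1) :
    trA (projV (prod3 u v w)) = projV (prod2 v w) := by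
  ext x y
  show (∑ t, prod3 u v w (t, x.1, x.2) * star (prod3 u v w (t, y.1, y.2))) = _
  have h1 : ∀ t, prod3 u v w (t, x.1, x.2) * star (prod3 u v w (t, y.1, y.2))
      = (star (u t) * u t) * (prod2 v w x * star (prod2 v w y)) := by
    intro t; simp only [prod3, prod2, star_mul']; ring
  simp only [h1, ← Finset.sum_mul, hu, one_mul]
  rfl

lemma trR_proj2 {m n : ℕ} {v : Fin m → ℂ} {w : Fin n → ℂ} (hw : (∑ x, star (w x) * w x) = 1) :
    trR (projV (prod2 v w)) = projV v := by
  ext x y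
  show (∑ t, prod2 v w (x, t) * star (prod2 v w (y, t))) = _
  have h1 : ∀ t, prod2 v w (x, t) * star (prod2 v w (y, t))
      = (star (w t) * w t) * (v x * star (v y)) := by
    intro t; simp only [prod2, star_mul']; ring
  simp only [h1, ← Finset.sum_mul, hw, one_mul]
  rfl

lemma trL_proj2 {m n : ℕ} {v : Fin m → ℂ} {w : Fin n → ℂ} (hv : (∑ x, star (v x) * v x) = 1) :
    trL (projV (prod2 v w)) = projV w := by
  ext x y
  show (∑ t, prod2 v w (t, x) * star (prod2 v w (t, y))) = _
  have h1 : ∀ t, prod2 v w (t, x) * star (prod2 v w (t, y))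
      = (star (v t) * v t) * (w x * star (w y)) := by
    intro t; simp only [prod2, star_mul']; ring
  simp only [h1, ← Finset.sum_mul, hv, one_mul]
  rfl

lemma real_smul_mat {ι : Type*} (r : ℝ) (M : Matrix ι ι ℂ) : r • M = (r : ℂ) • M := by
  ext x y; simp [Complex.real_smul]

lemma qf_sum {ι : Type*} {κ : Type*} [Fintype ι] (s : Finset κ) (M : κ → Matrix ι ι ℂ) (u : ι → ℂ) :
    star u ⬝ᵥ (∑ k ∈ s, M k) *ᵥ u = ∑ k ∈ s, star u ⬝ᵥ (M k) *ᵥ u := by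
  rw [mulVec_sum]
  simp only [dotProduct, Finset.sum_apply, Finset.mul_sum, Pi.star_apply]
  exact Finset.sum_comm

lemma qf_smul {ι : Type*} [Fintype ι] (r : ℝ) (M : Matrix ι ι ℂ) (u : ι → ℂ) :
    star u ⬝ᵥ (r • M) *ᵥ u = (r : ℂ) * (star u ⬝ᵥ M *ᵥ u) := by
  rw [real_smul_mat]
  simp only [dotProduct, Matrix.mulVec, Matrix.smul_apply, smul_eq_mul, Finset.mul_sum]
  refine Finset.sum_congr rfl fun x _ => Finset.sum_congr rfl fun y _ => by ring

lemma qf_projV {ι : Type*} [Fintype ι] (v u : ι → ℂ) :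
    star u ⬝ᵥ projV v *ᵥ u = (∑ x, star (u x) * v x) * (∑ y, star (v y) * u y) := by
  simp only [dotProduct, Matrix.mulVec, projV, Pi.star_apply, Finset.sum_mul_sum]
  refine Finset.sum_congr rfl fun x _ => ?_
  rw [Finset.mul_sum]
  refine Finset.sum_congr rfl fun y _ => by ring

lemma inner_prod2 {m n : ℕ} {v v' : Fin m → ℂ} {w w' : Fin n → ℂ} :
    (∑ x, star (prod2 v w x) * prod2 v' w' x)
      = (∑ x, star (v x) * v' x) * (∑ y, star (w y) * w' y) := by
  rw [Fintype.sum_prod_type, Finset.sum_mul_sum]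
  refine Finset.sum_congr rfl fun x _ => Finset.sum_congr rfl fun y _ => ?_
  simp only [prod2, star_mul']; ring

lemma projV_herm {ι : Type*} [Fintype ι] [DecidableEq ι] (v : ι → ℂ) :
    (projV v).IsHermitian := by
  ext x y; simp [Matrix.conjTranspose_apply, projV, mul_comm]

lemma projV_psd {ι : Type*} [Fintype ι] [DecidableEq ι] (v : ι → ℂ) :
    (projV v).PosSemidef := by
  refine Matrix.PosSemidef.of_dotProduct_mulVec_nonneg (projV_herm v) fun u => ?_
  rw [qf_projV]
  have h1 : (∑ x, star (u x) * v x) = star (∑ y, star (v y) * u y) := by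
    rw [star_sum]; exact Finset.sum_congr rfl fun x _ => by simp [star_mul']; ring
  rw [h1]
  exact star_mul_self_nonneg _

lemma psd_sum {ι : Type*} {κ : Type*} [Fintype ι] [DecidableEq ι] (s : Finset κ)
    (M : κ → Matrix ι ι ℂ) (h : ∀ k ∈ s, (M k).PosSemidef) :
    (∑ k ∈ s, M k).PosSemidef := by
  refine Matrix.PosSemidef.of_dotProduct_mulVec_nonneg ?_ ?_
  · show (∑ k ∈ s, M k)ᴴ = _
    rw [Matrix.conjTranspose_sum]
    exact Finset.sum_congr rfl fun k hk => (h k hk).1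
  · intro u
    rw [qf_sum]
    exact Finset.sum_nonneg fun k hk => (h k hk).dotProduct_mulVec_nonneg u

lemma psd_rsmul {ι : Type*} [Fintype ι] [DecidableEq ι] {r : ℝ} (hr : 0 ≤ r)
    {M : Matrix ι ι ℂ} (h : M.PosSemidef) : (r • M).PosSemidef := by
  refine Matrix.PosSemidef.of_dotProduct_mulVec_nonneg ?_ ?_
  · show (r • M)ᴴ = _
    rw [real_smul_mat, Matrix.conjTranspose_smul,
      show star ((r : ℝ) : ℂ) = ((r : ℝ) : ℂ) from by simp [Complex.star_def, Complex.conj_ofReal],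
      h.1, ← real_smul_mat]
  · intro u
    rw [qf_smul]
    exact mul_nonneg (by exact_mod_cast Complex.zero_le_real.mpr hr) (h.dotProduct_mulVec_nonneg u)

lemma proj2_congr {m n : ℕ} {u u' : Fin m → ℂ} {v v' : Fin n → ℂ}
    (hu : projV u = projV u') (hv : projV v = projV v') :
    projV (prod2 u v) = projV (prod2 u' v') := by
  funext x y
  have h1 : ∀ (a b : Fin m → ℂ) (c d : Fin n → ℂ) (x y : Fin m × Fin n),
      projV (prod2 a c) x y = projV a x.1 y.1 * projV c x.2 y.2 := by
    intro a b c d x y; simp only [projV, prod2, star_mul']; ring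
  rw [h1 u u v v, h1 u' u' v' v', hu, hv]




lemma qf_proj2_eval {m n : ℕ} (u u' : Fin m → ℂ) (w w' : Fin n → ℂ) :
    star (prod2 u w) ⬝ᵥ projV (prod2 u' w') *ᵥ prod2 u w
      = ((∑ x, star (u x) * u' x) * (∑ x, star (w x) * w' x))
        * ((∑ x, star (u' x) * u x) * (∑ x, star (w' x) * w x)) := by
  rw [qf_projV, inner_prod2, inner_prod2]

lemma qf_classical_eval {m n : ℕ} {A : Fin m → Fin m → ℂ} {B : Fin n → Fin n → ℂ}
    (hA : ONB A) (hB : ONB B) (p : Fin m → Fin n → ℝ)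
    (e : Equiv.Perm (Fin m)) (e2 : Equiv.Perm (Fin n)) (i : Fin m) (k : Fin n) :
    star (prod2 (A i) (B k)) ⬝ᵥ
      (∑ i', ∑ k', p i' k' • projV (prod2 (A (e i')) (B (e2 k')))) *ᵥ prod2 (A i) (B k)
      = ((p (e.symm i) (e2.symm k) : ℝ) : ℂ) := by
  have hA' : ∀ i j, (∑ x, star (A i x) * A j x) = if i = j then (1:ℂ) else 0 := hA
  have hB' : ∀ i j, (∑ x, star (B i x) * B j x) = if i = j then (1:ℂ) else 0 := hB
  rw [qf_sum]
  simp only [qf_sum, qf_smul, qf_proj2_eval, hA', hB']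
  rw [Finset.sum_eq_single (e.symm i)]
  · rw [Finset.sum_eq_single (e2.symm k)]
    · simp
    · intro k' _ hk'
      have hne : ¬ (k = e2 k') := fun h => hk' (by rw [h]; simp)
      simp [hne]
    · simp
  · intro i' _ hi'
    have hne : ¬ (i = e i') := fun h => hi' (by rw [h]; simp)
    simp [hne]
  · simp

lemma trace_trC {dA dB dC : ℕ} (M : Tri dA dB dC) : (trC M).trace = M.trace := by
  show (∑ x : Fin dA × Fin dB, ∑ t, M (x.1, x.2, t) (x.1, x.2, t)) = ∑ x, M x x
  rw [Fintype.sum_prod_type (f := fun x : (Fin dA × Fin dB × Fin dC) => M x x)]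
  rw [Fintype.sum_prod_type]
  exact Finset.sum_congr rfl fun x1 _ => by rw [Fintype.sum_prod_type]

lemma trace_trR {m n : ℕ} (M : Bip m n) : (trR M).trace = M.trace := by
  show (∑ x : Fin m, ∑ t, M (x, t) (x, t)) = ∑ x, M x x
  rw [Fintype.sum_prod_type (f := fun x : (Fin m × Fin n) => M x x)]

lemma trace_projV_single {n : ℕ} {v : Fin n → ℂ} (hv : (∑ x, star (v x) * v x) = 1) :
    (projV v).trace = 1 := by
  show (∑ x, v x * star (v x)) = 1
  rw [show (∑ x, v x * star (v x)) = ∑ x, star (v x) * v x from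
    Finset.sum_congr rfl fun x _ => mul_comm _ _, hv]

/-- compatible fully classical bipartite states with nondegenerate
one-party marginals are compatible with a fully classical tripartite state. -/
theorem stmt_6 {dA dB dC : ℕ}
    (ρAB : Bip dA dB) (ρAC : Bip dA dC) (ρBC : Bip dB dC)
    (hfcAB : FullyClassical ρAB) (hfcAC : FullyClassical ρAC)
    (hfcBC : FullyClassical ρBC)
    (ρABC : Tri dA dB dC) (hρ : IsDensity ρABC)
    (hAB : trC ρABC = ρAB) (hAC : trB ρABC = ρAC) (hBC : trA ρABC = ρBC)
    (hndA : ¬ Degenerate (trR ρAB)) (hndB : ¬ Degenerate (trL ρAB))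
    (hndC : ¬ Degenerate (trL ρAC)) :
    ∃ σ : Tri dA dB dC, IsDensity σ ∧ FullyClassicalTri σ ∧
      trC σ = ρAB ∧ trB σ = ρAC ∧ trA σ = ρBC := by
  classical
  obtain ⟨a, b, p, ha, hb, hp, hABdef⟩ := hfcAB
  obtain ⟨a', c, q, ha', hc, hq, hACdef⟩ := hfcAC
  obtain ⟨b', c', r, hb', hc', hrr, hBCdef⟩ := hfcBC
  have hna : ∀ i, (∑ x, star (a i x) * a i x) = 1 := fun i => by simpa using ha i i
  have hnb : ∀ j, (∑ x, star (b j x) * b j x) = 1 := fun j => by simpa using hb j j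
  have hnc : ∀ k, (∑ x, star (c k x) * c k x) = 1 := fun k => by simpa using hc k k
  have hna' : ∀ i, (∑ x, star (a' i x) * a' i x) = 1 := fun i => by simpa using ha' i i
  have hnb' : ∀ j, (∑ x, star (b' j x) * b' j x) = 1 := fun j => by simpa using hb' j j
  have hnc' : ∀ k, (∑ x, star (c' k x) * c' k x) = 1 := fun k => by simpa using hc' k k
  obtain ⟨f, hfdef⟩ : ∃ f : Fin dA → Fin dB → Fin dC → ℝ,
      ∀ i j k, f i j k
        = (star (prod3 (a i) (b j) (c k)) ⬝ᵥ ρABC *ᵥ prod3 (a i) (b j) (c k)).re :=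
    ⟨_, fun _ _ _ => rfl⟩
  have hf0 : ∀ i j k, 0 ≤ f i j k := by
    intro i j k; rw [hfdef]
    exact (Complex.nonneg_iff.mp (hρ.1.dotProduct_mulVec_nonneg _)).1
  have hfC : ∀ i j k, ((f i j k : ℝ) : ℂ)
      = star (prod3 (a i) (b j) (c k)) ⬝ᵥ ρABC *ᵥ prod3 (a i) (b j) (c k) := by
    intro i j k
    have h := Complex.nonneg_iff.mp (hρ.1.dotProduct_mulVec_nonneg (prod3 (a i) (b j) (c k)))
    rw [hfdef]
    exact Complex.ext (by simp) (by simpa using h.2)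
  have hρA_eq : trR ρAB = trR ρAC := by
    rw [← hAB, ← hAC]
    ext i j
    show (∑ x2 : Fin dB, ∑ x3 : Fin dC, ρABC (i, x2, x3) (j, x2, x3))
        = ∑ x3 : Fin dC, ∑ x2 : Fin dB, ρABC (i, x2, x3) (j, x2, x3)
    exact Finset.sum_comm
  have hρB_eq : trL ρAB = trR ρBC := by
    rw [← hAB, ← hBC]
    ext i j
    show (∑ x1 : Fin dA, ∑ x3 : Fin dC, ρABC (x1, i, x3) (x1, j, x3))
        = ∑ x3 : Fin dC, ∑ x1 : Fin dA, ρABC (x1, i, x3) (x1, j, x3)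
    exact Finset.sum_comm
  have hρC_eq : trL ρAC = trL ρBC := by
    rw [← hAC, ← hBC]
    ext i j
    show (∑ x1 : Fin dA, ∑ x2 : Fin dB, ρABC (x1, x2, i) (x1, x2, j))
        = ∑ x2 : Fin dB, ∑ x1 : Fin dA, ρABC (x1, x2, i) (x1, x2, j)
    exact Finset.sum_comm
  have hA1 : trR ρAB = ∑ i, ((∑ j, p i j : ℝ) : ℂ) • projV (a i) := by
    rw [hABdef, trR_sum]
    refine Finset.sum_congr rfl fun i _ => ?_
    rw [trR_sum]
    have h1 : ∀ j, trR (p i j • projV (prod2 (a i) (b j))) = p i j • projV (a i) :=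
      fun j => by rw [trR_smul, trR_proj2 (hnb j)]
    simp only [h1]
    rw [← Finset.sum_smul, real_smul_mat]
  have hA2 : trR ρAC = ∑ i, ((∑ k, q i k : ℝ) : ℂ) • projV (a' i) := by
    rw [hACdef, trR_sum]
    refine Finset.sum_congr rfl fun i _ => ?_
    rw [trR_sum]
    have h1 : ∀ k, trR (q i k • projV (prod2 (a' i) (c k))) = q i k • projV (a' i) :=
      fun k => by rw [trR_smul, trR_proj2 (hnc k)]
    simp only [h1]
    rw [← Finset.sum_smul, real_smul_mat]
  have hB1 : trL ρAB = ∑ j, ((∑ i, p i j : ℝ) : ℂ) • projV (b j) := by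
    rw [hABdef, trL_sum]
    have h1 : ∀ i, trL (∑ j, p i j • projV (prod2 (a i) (b j)))
        = ∑ j, p i j • projV (b j) := by
      intro i; rw [trL_sum]
      exact Finset.sum_congr rfl fun j _ => by rw [trL_smul, trL_proj2 (hna i)]
    simp only [h1]
    rw [Finset.sum_comm]
    refine Finset.sum_congr rfl fun j _ => ?_
    rw [← Finset.sum_smul, real_smul_mat]
  have hB2 : trR ρBC = ∑ j, ((∑ k, r j k : ℝ) : ℂ) • projV (b' j) := by
    rw [hBCdef, trR_sum]
    refine Finset.sum_congr rfl fun j _ => ?_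
    rw [trR_sum]
    have h1 : ∀ k, trR (r j k • projV (prod2 (b' j) (c' k))) = r j k • projV (b' j) :=
      fun k => by rw [trR_smul, trR_proj2 (hnc' k)]
    simp only [h1]
    rw [← Finset.sum_smul, real_smul_mat]
  have hC1 : trL ρAC = ∑ k, ((∑ i, q i k : ℝ) : ℂ) • projV (c k) := by
    rw [hACdef, trL_sum]
    have h1 : ∀ i, trL (∑ k, q i k • projV (prod2 (a' i) (c k)))
        = ∑ k, q i k • projV (c k) := by
      intro i; rw [trL_sum]
      exact Finset.sum_congr rfl fun k _ => by rw [trL_smul, trL_proj2 (hna' i)]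
    simp only [h1]
    rw [Finset.sum_comm]
    refine Finset.sum_congr rfl fun k _ => ?_
    rw [← Finset.sum_smul, real_smul_mat]
  have hC2 : trL ρBC = ∑ k, ((∑ j, r j k : ℝ) : ℂ) • projV (c' k) := by
    rw [hBCdef, trL_sum]
    have h1 : ∀ j, trL (∑ k, r j k • projV (prod2 (b' j) (c' k)))
        = ∑ k, r j k • projV (c' k) := by
      intro j; rw [trL_sum]
      exact Finset.sum_congr rfl fun k _ => by rw [trL_smul, trL_proj2 (hnb' j)]
    simp only [h1]
    rw [Finset.sum_comm]
    refine Finset.sum_congr rfl fun k _ => ?_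
    rw [← Finset.sum_smul, real_smul_mat]
  obtain ⟨eA, heA⟩ := rigidity (lam := fun i => ∑ j, p i j) (mu := fun i => ∑ k, q i k)
    ha ha' (by rw [← hA1, ← hA2]; exact hρA_eq) (by rw [← hA1]; exact hndA)
  obtain ⟨eB, heB⟩ := rigidity (lam := fun j => ∑ i, p i j) (mu := fun j => ∑ k, r j k)
    hb hb' (by rw [← hB1, ← hB2]; exact hρB_eq) (by rw [← hB1]; exact hndB)
  obtain ⟨eC, heC⟩ := rigidity (lam := fun k => ∑ i, q i k) (mu := fun k => ∑ j, r j k)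
    hc hc' (by rw [← hC1, ← hC2]; exact hρC_eq) (by rw [← hC1]; exact hndC)
  have hACdef' : ρAC = ∑ i', ∑ k', q i' k' • projV (prod2 (a (eA i')) (c k')) := by
    rw [hACdef]
    exact Finset.sum_congr rfl fun i' _ => Finset.sum_congr rfl fun k' _ => by
      rw [proj2_congr (heA i') rfl]
  have hBCdef' : ρBC = ∑ j', ∑ k', r j' k' • projV (prod2 (b (eB j')) (c (eC k'))) := by
    rw [hBCdef]
    exact Finset.sum_congr rfl fun j' _ => Finset.sum_congr rfl fun k' _ => by
      rw [proj2_congr (heB j') (heC k')]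
  have hfpC : ∀ i j, (∑ k, ((f i j k : ℝ) : ℂ)) = ((p i j : ℝ) : ℂ) := by
    intro i j
    calc (∑ k, ((f i j k : ℝ) : ℂ))
        = ∑ k, star (prod3 (a i) (b j) (c k)) ⬝ᵥ ρABC *ᵥ prod3 (a i) (b j) (c k) :=
          Finset.sum_congr rfl fun k _ => hfC i j k
      _ = star (prod2 (a i) (b j)) ⬝ᵥ trC ρABC *ᵥ prod2 (a i) (b j) := qf_trC ρABC hc _ _
      _ = star (prod2 (a i) (b j)) ⬝ᵥ ρAB *ᵥ prod2 (a i) (b j) := by rw [hAB]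
      _ = ((p i j : ℝ) : ℂ) := by
          rw [hABdef]
          have h2 := qf_classical_eval ha hb p (Equiv.refl _) (Equiv.refl _) i j
          simpa using h2
  have hfp : ∀ i j, (∑ k, f i j k) = p i j := by
    intro i j; exact_mod_cast hfpC i j
  have hfqC : ∀ i k, (∑ j, ((f i j k : ℝ) : ℂ)) = ((q (eA.symm i) k : ℝ) : ℂ) := by
    intro i k
    calc (∑ j, ((f i j k : ℝ) : ℂ))
        = ∑ j, star (prod3 (a i) (b j) (c k)) ⬝ᵥ ρABC *ᵥ prod3 (a i) (b j) (c k) :=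
          Finset.sum_congr rfl fun j _ => hfC i j k
      _ = star (prod2 (a i) (c k)) ⬝ᵥ trB ρABC *ᵥ prod2 (a i) (c k) := qf_trB ρABC hb _ _
      _ = star (prod2 (a i) (c k)) ⬝ᵥ ρAC *ᵥ prod2 (a i) (c k) := by rw [hAC]
      _ = ((q (eA.symm i) k : ℝ) : ℂ) := by
          rw [hACdef']
          have h2 := qf_classical_eval ha hc q eA (Equiv.refl _) i k
          simpa using h2
  have hfq : ∀ i k, (∑ j, f i j k) = q (eA.symm i) k := by
    intro i k; exact_mod_cast hfqC i k
  have hfrC : ∀ j k, (∑ i, ((f i j k : ℝ) : ℂ)) = ((r (eB.symm j) (eC.symm k) : ℝ) : ℂ) := by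
    intro j k
    calc (∑ i, ((f i j k : ℝ) : ℂ))
        = ∑ i, star (prod3 (a i) (b j) (c k)) ⬝ᵥ ρABC *ᵥ prod3 (a i) (b j) (c k) :=
          Finset.sum_congr rfl fun i _ => hfC i j k
      _ = star (prod2 (b j) (c k)) ⬝ᵥ trA ρABC *ᵥ prod2 (b j) (c k) := qf_trA ρABC ha _ _
      _ = star (prod2 (b j) (c k)) ⬝ᵥ ρBC *ᵥ prod2 (b j) (c k) := by rw [hBC]
      _ = ((r (eB.symm j) (eC.symm k) : ℝ) : ℂ) := by
          rw [hBCdef']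
          exact qf_classical_eval hb hc r eB eC j k
  have hfr : ∀ j k, (∑ i, f i j k) = r (eB.symm j) (eC.symm k) := by
    intro j k; exact_mod_cast hfrC j k
  refine ⟨∑ i, ∑ j, ∑ k, f i j k • projV (prod3 (a i) (b j) (c k)), ?_, ?_, ?_, ?_, ?_⟩
  · constructor
    · exact psd_sum _ _ fun i _ => psd_sum _ _ fun j _ => psd_sum _ _ fun k _ =>
        psd_rsmul (hf0 i j k) (projV_psd _)
    · have htr3 : ∀ i j k, (projV (prod3 (a i) (b j) (c k))).trace = 1 := by
        intro i j k
        rw [← trace_trC, trC_proj3 (hnc k), ← trace_trR, trR_proj2 (hnb j),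
          trace_projV_single (hna i)]
      have hτ2 : ρAB.trace = ∑ i, ∑ j, ((p i j : ℝ) : ℂ) := by
        rw [hABdef]
        simp only [Matrix.trace_sum, Matrix.trace_smul]
        refine Finset.sum_congr rfl fun i _ => Finset.sum_congr rfl fun j _ => ?_
        rw [← trace_trR, trR_proj2 (hnb j), trace_projV_single (hna i)]
        simp [Complex.real_smul]
      calc (∑ i, ∑ j, ∑ k, f i j k • projV (prod3 (a i) (b j) (c k))).trace
          = ∑ i, ∑ j, ∑ k, ((f i j k : ℝ) : ℂ) := by
            simp only [Matrix.trace_sum, Matrix.trace_smul, htr3, Complex.real_smul, mul_one]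
        _ = ∑ i, ∑ j, ((p i j : ℝ) : ℂ) := by simp only [hfpC]
        _ = ρAB.trace := hτ2.symm
        _ = 1 := by rw [← hAB, trace_trC]; exact hρ.2
  · exact ⟨a, b, c, f, ha, hb, hc, hf0, rfl⟩
  · have h3 : ∀ i j k, trC (f i j k • projV (prod3 (a i) (b j) (c k)))
        = f i j k • projV (prod2 (a i) (b j)) :=
      fun i j k => by rw [trC_smul, trC_proj3 (hnc k)]
    simp only [trC_sum, h3]
    rw [hABdef]
    refine Finset.sum_congr rfl fun i _ => Finset.sum_congr rfl fun j _ => ?_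
    rw [← Finset.sum_smul, hfp i j]
  · have h3 : ∀ i j k, trB (f i j k • projV (prod3 (a i) (b j) (c k)))
        = f i j k • projV (prod2 (a i) (c k)) :=
      fun i j k => by rw [trB_smul, trB_proj3 (hnb j)]
    simp only [trB_sum, h3]
    rw [hACdef']
    rw [show (∑ i', ∑ k', q i' k' • projV (prod2 (a (eA i')) (c k')))
        = ∑ i, ∑ k', q (eA.symm i) k' • projV (prod2 (a i) (c k')) from
      Fintype.sum_equiv eA _ _ (fun i' => by simp)]
    refine Finset.sum_congr rfl fun i _ => ?_
    rw [Finset.sum_comm]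
    refine Finset.sum_congr rfl fun k _ => ?_
    rw [← Finset.sum_smul, hfq i k]
  · have h3 : ∀ i j k, trA (f i j k • projV (prod3 (a i) (b j) (c k)))
        = f i j k • projV (prod2 (b j) (c k)) :=
      fun i j k => by rw [trA_smul, trA_proj3 (hna i)]
    simp only [trA_sum, h3]
    rw [← rot3 (fun j k i => f i j k • projV (prod2 (b j) (c k)))]
    rw [hBCdef']
    rw [show (∑ j', ∑ k', r j' k' • projV (prod2 (b (eB j')) (c (eC k'))))
        = ∑ j, ∑ k, r (eB.symm j) (eC.symm k) • projV (prod2 (b j) (c k)) from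
      Fintype.sum_equiv eB _ _ (fun j' => Fintype.sum_equiv eC _ _ (fun k' => by simp))]
    refine Finset.sum_congr rfl fun j _ => Finset.sum_congr rfl fun k _ => ?_
    rw [← Finset.sum_smul, hfr j k]
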